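/- arXiv:2302.11182 — 7 statements merged into one kernel-verified Lean document; each statement's English description precedes it below -/
import Mathlib

section
/- Let f : Set → ℝ be a monotone submodular set function on subsets of a finite ground set, let A* be a set of size k, and let A^i ⊂ A^{i+1} with |A^{i+1} \ A^i| = 1 (a greedy-type chain, a_{i+1} being the added element). Then f(A*) - f(A^i) ≤ Σ_{a ∈ A* \ A^i} (f({a} ∪ A^i) - f(A^{i+1})) + k·(f(A^{i+1}) - f(A^i)). -/
lemma submodular_union_bound {α : Type*} [DecidableEq α]
    (f : Finset α → ℝ)
    (hmono : ∀ A B : Finset α, A ⊆ B → f A ≤ f B)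
    (hsub : ∀ A B : Finset α, f (A ∪ B) + f (A ∩ B) ≤ f A + f B)
    (A : Finset α) (S : Finset α) :
    f (A ∪ S) ≤ f A + ∑ a ∈ S, (f (insert a A) - f A) := by
  induction S using Finset.induction_on with
  | empty => simp
  | @insert b S hb ih =>
    have hU : A ∪ insert b S = (A ∪ S) ∪ insert b A := by
      ext x; simp [or_comm, or_assoc, or_left_comm]
    have h1 := hsub (A ∪ S) (insert b A)
    have h2 : f A ≤ f ((A ∪ S) ∩ insert b A) := by
      apply hmono
      intro x hx
      simp [hx]
    rw [Finset.sum_insert hb]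
    rw [hU]
    linarith

theorem submodular_greedy_step_bound {α : Type*} [DecidableEq α]
    (f : Finset α → ℝ)
    (hmono : ∀ A B : Finset α, A ⊆ B → f A ≤ f B)
    (hsub : ∀ A B : Finset α, f (A ∪ B) + f (A ∩ B) ≤ f A + f B)
    (k : ℕ) (Astar : Finset α) (hAstar : Astar.card = k)
    (Ai : Finset α) (a1 : α) (ha1 : a1 ∉ Ai) :
    f Astar - f Ai ≤
      (∑ a ∈ Astar \ Ai, (f (insert a Ai) - f (insert a1 Ai)))
        + (k : ℝ) * (f (insert a1 Ai) - f Ai) := by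
  have h1 : f Astar ≤ f (Ai ∪ (Astar \ Ai)) := by
    apply hmono
    intro x hx
    by_cases h : x ∈ Ai <;> simp [h, hx]
  have h2 := submodular_union_bound f hmono hsub Ai (Astar \ Ai)
  have hgain : 0 ≤ f (insert a1 Ai) - f Ai := by
    have := hmono Ai (insert a1 Ai) (Finset.subset_insert _ _)
    linarith
  have hcard : ((Astar \ Ai).card : ℝ) ≤ (k : ℝ) := by
    exact_mod_cast hAstar ▸ Finset.card_le_card (Finset.sdiff_subset)
  have hsplit : ∑ a ∈ Astar \ Ai, (f (insert a Ai) - f Ai)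
      = (∑ a ∈ Astar \ Ai, (f (insert a Ai) - f (insert a1 Ai)))
        + ((Astar \ Ai).card : ℝ) * (f (insert a1 Ai) - f Ai) := by
    rw [Finset.sum_sub_distrib, Finset.sum_sub_distrib]
    simp [Finset.sum_const, nsmul_eq_mul]
    ring
  nlinarith [mul_le_mul_of_nonneg_right hcard hgain]
end

section
/- Let f be a monotone submodular function with f(∅) ≥ 0 on subsets of a finite set, A* a set of size k, and A^0 ⊆ A^1 ⊆ ... ⊆ A^k a chain with |A^i| = i, A^0 = ∅. Then f(A*) - f(A^k) ≤ f(A*)(1 - 1/k)^k + Σ_{i=1}^{k} ((1 - 1/k)^{i-1}/k) · Σ_{a ∈ A* \ A^{k-i}} (f({a} ∪ A^{k-i}) - f(A^{k-i+1})). -/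
open Finset

lemma marginal_bound {α : Type*} [DecidableEq α] (f : Finset α → ℝ)
    (hsub : ∀ A B : Finset α, f (A ∪ B) + f (A ∩ B) ≤ f A + f B)
    (S B : Finset α) :
    f (S ∪ B) ≤ f B + ∑ a ∈ S \ B, (f (insert a B) - f B) := by
  induction S using Finset.induction_on with
  | empty => simp
  | @insert a S ha ih =>
    by_cases hb : a ∈ B
    · have h1 : insert a S ∪ B = S ∪ B := by
        rw [Finset.insert_union, Finset.insert_eq_self.2 (Finset.mem_union_right _ hb)]
      have h2 : insert a S \ B = S \ B := by
        ext x
        simp only [Finset.mem_sdiff, Finset.mem_insert]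
        constructor
        · rintro ⟨h1 | h1, h2⟩
          · exact absurd (h1 ▸ hb) h2
          · exact ⟨h1, h2⟩
        · rintro ⟨h1, h2⟩; exact ⟨Or.inr h1, h2⟩
      rw [h1, h2]; exact ih
    · have h2 : insert a S \ B = insert a (S \ B) := by
        ext x
        simp only [Finset.mem_sdiff, Finset.mem_insert]
        constructor
        · rintro ⟨h1 | h1, h3⟩
          · exact Or.inl h1
          · exact Or.inr ⟨h1, h3⟩
        · rintro (rfl | ⟨h1, h3⟩)
          · exact ⟨Or.inl rfl, hb⟩
          · exact ⟨Or.inr h1, h3⟩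
      have hanot : a ∉ S \ B := by simp [ha]
      have hu : insert a B ∪ (S ∪ B) = insert a (S ∪ B) := by
        ext x
        simp only [Finset.mem_union, Finset.mem_insert]
        tauto
      have hi : insert a B ∩ (S ∪ B) = B := by
        ext x
        simp only [Finset.mem_inter, Finset.mem_union, Finset.mem_insert]
        constructor
        · rintro ⟨rfl | h1, h3 | h3⟩
          · exact absurd h3 ha
          · exact absurd h3 hb
          · exact h1
          · exact h1
        · intro hx; exact ⟨Or.inr hx, Or.inr hx⟩
      have key := hsub (insert a B) (S ∪ B)
      rw [hu, hi] at key
      rw [Finset.insert_union, h2, Finset.sum_insert hanot]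
      linarith

theorem submodular_greedy_chain_bound {α : Type*} [DecidableEq α]
    (f : Finset α → ℝ)
    (hmono : ∀ A B : Finset α, A ⊆ B → f A ≤ f B)
    (hsub : ∀ A B : Finset α, f (A ∪ B) + f (A ∩ B) ≤ f A + f B)
    (hempty : 0 ≤ f ∅)
    (k : ℕ) (hk : 0 < k) (Astar : Finset α) (hAstar : Astar.card = k)
    (A : ℕ → Finset α) (hA0 : A 0 = ∅)
    (hchain : ∀ i < k, A i ⊆ A (i + 1))
    (hcard : ∀ i ≤ k, (A i).card = i) :
    f Astar - f (A k) ≤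
      f Astar * (1 - 1 / (k : ℝ)) ^ k
        + ∑ i ∈ Finset.Icc 1 k, ((1 - 1 / (k : ℝ)) ^ (i - 1) / (k : ℝ)) *
            ∑ a ∈ Astar \ A (k - i), (f (insert a (A (k - i))) - f (A (k - i + 1))) := by
  have hk' : (0 : ℝ) < k := by exact_mod_cast hk
  set c : ℝ := 1 - 1 / (k : ℝ) with hc
  have hc0 : 0 ≤ c := by
    have h1 : (1 : ℝ) ≤ k := by exact_mod_cast hk
    rw [hc, sub_nonneg]
    exact div_le_one_of_le₀ h1 (le_of_lt hk')
  set s : ℕ → ℝ := fun i => ∑ a ∈ Astar \ A i, (f (insert a (A i)) - f (A (i + 1))) with hs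
  have step : ∀ i < k, f Astar - f (A (i + 1)) ≤ c * (f Astar - f (A i)) + s i / k := by
    intro i hi
    have hδ : f (A i) ≤ f (A (i + 1)) := hmono _ _ (hchain i hi)
    have hm : ((Astar \ A i).card : ℝ) ≤ k := by
      have h1 : (Astar \ A i).card ≤ Astar.card := Finset.card_le_card Finset.sdiff_subset
      rw [hAstar] at h1
      exact_mod_cast h1
    have h1 : f Astar ≤ f (Astar ∪ A i) := hmono _ _ Finset.subset_union_left
    have h2 := marginal_bound f hsub Astar (A i)
    have h3 : ∑ a ∈ Astar \ A i, (f (insert a (A i)) - f (A i))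
        = s i + ((Astar \ A i).card : ℝ) * (f (A (i + 1)) - f (A i)) := by
      simp only [hs, Finset.sum_sub_distrib, Finset.sum_const, nsmul_eq_mul]
      ring
    have hmd : ((Astar \ A i).card : ℝ) * (f (A (i + 1)) - f (A i))
        ≤ (k : ℝ) * (f (A (i + 1)) - f (A i)) :=
      mul_le_mul_of_nonneg_right hm (by linarith)
    have h4 : f Astar ≤ f (A i) + s i + (k : ℝ) * (f (A (i + 1)) - f (A i)) := by
      rw [h3] at h2; linarith
    have h5 : (k : ℝ) * (f Astar - f (A (i + 1))) ≤ ((k : ℝ) - 1) * (f Astar - f (A i)) + s i := by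
      have e : (k : ℝ) * (f Astar - f (A (i + 1))) - (((k : ℝ) - 1) * (f Astar - f (A i)) + s i)
          = f Astar - (f (A i) + s i + (k : ℝ) * (f (A (i + 1)) - f (A i))) := by ring
      linarith
    have e2 : c * (f Astar - f (A i)) + s i / k
        = (((k : ℝ) - 1) * (f Astar - f (A i)) + s i) / k := by
      rw [hc]; field_simp
    rw [e2, le_div_iff₀ hk']
    linarith
  have main : ∀ n ≤ k, f Astar - f (A n) ≤ c ^ n * (f Astar - f (A 0))
      + ∑ j ∈ Finset.range n, (c ^ (n - 1 - j) / k) * s j := by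
    intro n
    induction n with
    | zero => intro _; simp
    | succ n ih =>
      intro hn
      have hnk : n < k := hn
      have h1 := step n hnk
      have h2 := ih (Nat.le_of_lt hnk)
      have h3 := mul_le_mul_of_nonneg_left h2 hc0
      have h4 : c * (c ^ n * (f Astar - f (A 0)) + ∑ j ∈ Finset.range n, (c ^ (n - 1 - j) / k) * s j)
          = c ^ (n + 1) * (f Astar - f (A 0)) + ∑ j ∈ Finset.range n, (c ^ (n - j) / k) * s j := by
        have hterm : ∀ j ∈ Finset.range n,
            c * (c ^ (n - 1 - j) / k * s j) = c ^ (n - j) / k * s j := by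
          intro j hj
          have hj' : j < n := Finset.mem_range.1 hj
          have he : n - 1 - j + 1 = n - j := by omega
          rw [← he, pow_succ]
          ring
        rw [mul_add, Finset.mul_sum, Finset.sum_congr rfl hterm, pow_succ]
        congr 1 <;> ring
      have h5 : ∑ j ∈ Finset.range (n + 1), (c ^ (n + 1 - 1 - j) / k) * s j
          = (∑ j ∈ Finset.range n, (c ^ (n - j) / k) * s j) + s n / k := by
        have t1 : ∀ j ∈ Finset.range n,
            c ^ (n + 1 - 1 - j) / k * s j = c ^ (n - j) / k * s j := by
          intro j hj
          have he : n + 1 - 1 - j = n - j := by omega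
          rw [he]
        have t2 : n + 1 - 1 - n = 0 := by omega
        rw [Finset.sum_range_succ, Finset.sum_congr rfl t1, t2, pow_zero, one_div,
          inv_mul_eq_div]
      rw [h4] at h3
      rw [h5]
      linarith
  have final := main k le_rfl
  rw [hA0] at final
  have hck : (0 : ℝ) ≤ c ^ k := pow_nonneg hc0 k
  have hfin2 : c ^ k * (f Astar - f ∅) ≤ c ^ k * f Astar :=
    mul_le_mul_of_nonneg_left (by linarith) hck
  have hsum : ∑ i ∈ Finset.Icc 1 k, (c ^ (i - 1) / (k : ℝ)) *
        ∑ a ∈ Astar \ A (k - i), (f (insert a (A (k - i))) - f (A (k - i + 1)))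
      = ∑ j ∈ Finset.range k, (c ^ (k - 1 - j) / k) * s j := by
    apply Finset.sum_nbij' (fun i => k - i) (fun j => k - j)
    · intro i hi
      simp only [Finset.mem_Icc] at hi
      simp only [Finset.mem_range]
      omega
    · intro j hj
      simp only [Finset.mem_range] at hj
      simp only [Finset.mem_Icc]
      omega
    · intro i hi
      simp only [Finset.mem_Icc] at hi
      omega
    · intro j hj
      simp only [Finset.mem_range] at hj
      omega
    · intro i hi
      simp only [Finset.mem_Icc] at hi
      have e1 : k - 1 - (k - i) = i - 1 := by omega
      simp only [hs]
      rw [e1]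
  calc f Astar - f (A k)
      ≤ c ^ k * (f Astar - f ∅) + ∑ j ∈ Finset.range k, (c ^ (k - 1 - j) / k) * s j := final
    _ ≤ c ^ k * f Astar + ∑ j ∈ Finset.range k, (c ^ (k - 1 - j) / k) * s j := by linarith
    _ = f Astar * c ^ k + ∑ i ∈ Finset.Icc 1 k, (c ^ (i - 1) / (k : ℝ)) *
          ∑ a ∈ Astar \ A (k - i), (f (insert a (A (k - i))) - f (A (k - i + 1))) := by
        rw [hsum]; ring
end

section
/- If the greedy chain is exact, i.e., for each i, f(A^{i+1}) = max_{a ∉ A^i} f(A^i ∪ {a}), then f(A^k) ≥ (1 - e^{-1}) f(A*) for any set A* of size k. -/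
lemma greedy_aux_union_le {α : Type*} [DecidableEq α] (f : Finset α → ℝ)
    (hmono : ∀ A B : Finset α, A ⊆ B → f A ≤ f B)
    (hsub : ∀ A B : Finset α, f (A ∪ B) + f (A ∩ B) ≤ f A + f B)
    (A : Finset α) (S : Finset α) :
    f (A ∪ S) ≤ f A + ∑ b ∈ S, (f (insert b A) - f A) := by
  induction S using Finset.induction_on with
  | empty => simp
  | @insert a S ha ih =>
    have h1 := hsub (insert a A) (A ∪ S)
    have h2 : (insert a A) ∪ (A ∪ S) = A ∪ insert a S := by
      ext x; simp [or_assoc, or_comm, or_left_comm]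
    have h3 : A ⊆ (insert a A) ∩ (A ∪ S) := by
      intro x hx; simp [hx]
    have h4 := hmono _ _ h3
    rw [h2] at h1
    rw [Finset.sum_insert ha]
    linarith

theorem greedy_submodular_one_sub_inv_e {α : Type*} [DecidableEq α]
    (f : Finset α → ℝ)
    (hmono : ∀ A B : Finset α, A ⊆ B → f A ≤ f B)
    (hsub : ∀ A B : Finset α, f (A ∪ B) + f (A ∩ B) ≤ f A + f B)
    (hempty : 0 ≤ f ∅)
    (k : ℕ) (Astar : Finset α) (hAstar : Astar.card = k)
    (A : ℕ → Finset α) (hA0 : A 0 = ∅)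
    (hgreedy : ∀ i < k, ∃ a ∉ A i, A (i + 1) = insert a (A i))
    (hexact : ∀ i < k, ∀ b ∉ A i, f (insert b (A i)) ≤ f (A (i + 1))) :
    (1 - Real.exp (-1)) * f Astar ≤ f (A k) := by
  rcases Nat.eq_zero_or_pos k with hk0 | hkpos
  · subst hk0
    have : Astar = ∅ := Finset.card_eq_zero.mp hAstar
    rw [this, hA0]
    have := Real.exp_pos (-1 : ℝ)
    nlinarith
  have hk : (0:ℝ) < (k:ℝ) := by exact_mod_cast hkpos
  set r : ℝ := 1 - 1 / k with hr
  have hr0 : 0 ≤ r := by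
    rw [hr]
    have : 1 / (k:ℝ) ≤ 1 := by
      rw [div_le_one hk]; exact_mod_cast hkpos
    linarith
  -- key step
  have step : ∀ i < k, f Astar - f (A (i+1)) ≤ r * (f Astar - f (A i)) := by
    intro i hi
    obtain ⟨a, ha, hAa⟩ := hgreedy i hi
    have hgain : 0 ≤ f (A (i+1)) - f (A i) := by
      have : A i ⊆ A (i+1) := by rw [hAa]; exact Finset.subset_insert _ _
      linarith [hmono _ _ this]
    have h1 : f Astar ≤ f (A i ∪ Astar) := hmono _ _ (Finset.subset_union_right)
    have h2 := greedy_aux_union_le f hmono hsub (A i) Astar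
    have h3 : ∑ b ∈ Astar, (f (insert b (A i)) - f (A i))
        ≤ ∑ b ∈ Astar, (f (A (i+1)) - f (A i)) := by
      apply Finset.sum_le_sum
      intro b hb
      by_cases hbA : b ∈ A i
      · rw [Finset.insert_eq_self.mpr hbA]; linarith
      · linarith [hexact i hi b hbA]
    have h4 : ∑ b ∈ Astar, (f (A (i+1)) - f (A i)) = (k:ℝ) * (f (A (i+1)) - f (A i)) := by
      rw [Finset.sum_const, hAstar, nsmul_eq_mul]
    have key : f Astar - f (A i) ≤ (k:ℝ) * (f (A (i+1)) - f (A i)) := by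
      rw [← h4]; linarith
    have : r * (f Astar - f (A i)) = (f Astar - f (A i)) - (1/k) * (f Astar - f (A i)) := by
      ring
    rw [this]
    have : (1/(k:ℝ)) * (f Astar - f (A i)) ≤ f (A (i+1)) - f (A i) := by
      rw [div_mul_eq_mul_div, div_le_iff₀ hk]
      nlinarith
    linarith
  -- iterate
  have iter : ∀ i ≤ k, f Astar - f (A i) ≤ r ^ i * (f Astar - f (A 0)) := by
    intro i
    induction i with
    | zero => intro _; simp
    | succ n ih =>
      intro hn
      have hnk : n < k := hn
      have h1 := step n hnk
      have h2 := ih (le_of_lt hnk)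
      calc f Astar - f (A (n+1)) ≤ r * (f Astar - f (A n)) := h1
        _ ≤ r * (r ^ n * (f Astar - f (A 0))) := by
            exact mul_le_mul_of_nonneg_left h2 hr0
        _ = r ^ (n+1) * (f Astar - f (A 0)) := by ring
  have hfin := iter k le_rfl
  -- r^k ≤ exp(-1)
  have hrexp : r ^ k ≤ Real.exp (-1) := by
    have h1 : r ≤ Real.exp (-(1/k)) := by
      have := Real.add_one_le_exp (-(1/(k:ℝ)))
      linarith
    calc r ^ k ≤ (Real.exp (-(1/k))) ^ k := pow_le_pow_left₀ hr0 h1 k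
      _ = Real.exp (-(1/k) * k) := by rw [← Real.exp_nat_mul]; ring_nf
      _ = Real.exp (-1) := by
          congr 1
          field_simp
  have hAs0 : 0 ≤ f Astar := le_trans hempty (hmono ∅ Astar (Finset.empty_subset _))
  have hd0 : f Astar - f (A 0) ≤ f Astar := by rw [hA0]; linarith
  have hexp0 : (0:ℝ) < Real.exp (-1) := Real.exp_pos _
  have : f Astar - f (A k) ≤ Real.exp (-1) * f Astar := by
    calc f Astar - f (A k) ≤ r ^ k * (f Astar - f (A 0)) := hfin
      _ ≤ Real.exp (-1) * (f Astar - f (A 0)) := by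
          apply mul_le_mul_of_nonneg_right hrexp
          rw [hA0]
          -- need nonneg: f Astar - f ∅ could be negative? f Astar ≥ f ∅ by mono
          have := hmono ∅ Astar (Finset.empty_subset _)
          linarith
      _ ≤ Real.exp (-1) * f Astar := by
          apply mul_le_mul_of_nonneg_left _ (le_of_lt hexp0)
          rw [hA0]; linarith
  linarith
end

section
/- Greedy 2-approximation step bound for k-center: Let (V,d) be a finite metric space, A = {a_1,...,a_k} ⊆ V, E_j = {a_1,...,a_j}, and A* ⊆ V with |A*| = k. Then (1/2)·max_{v∈V} d(v, A) − max_{v∈V} d(v, A*) ≤ (1/2)·max_{j∈[k−1]} (max_{v∈V} d(v, E_j) − d(a_{j+1}, E_j)). -/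
open Metric

theorem kcenter_greedy_step_bound {V : Type*} [Fintype V] [Nonempty V] [MetricSpace V]
    [DecidableEq V]
    (k : ℕ) (hk : 2 ≤ k) (a : ℕ → V)
    (hinj : ∀ i < k, ∀ j < k, a i = a j → i = j)
    (Astar : Finset V) (hAstar : Astar.card = k) :
    (1 / 2) * (⨆ v : V, Metric.infDist v (((Finset.range k).image a : Finset V) : Set V))
        - (⨆ v : V, Metric.infDist v (Astar : Set V))
      ≤ (1 / 2) * (Finset.Icc 1 (k - 1)).sup'
          (Finset.nonempty_Icc.mpr (by omega))
          (fun j =>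
            (⨆ v : V, Metric.infDist v (((Finset.range j).image a : Finset V) : Set V))
              - Metric.infDist (a j) (((Finset.range j).image a : Finset V) : Set V)) := by
  classical
  set A : Finset V := (Finset.range k).image a with hA
  have bdd : ∀ f : V → ℝ, BddAbove (Set.range f) := fun f => (Set.finite_range f).bddAbove
  obtain ⟨v0, hv0⟩ : ∃ v0 : V, ∀ w : V, infDist w (A : Set V) ≤ infDist v0 (A : Set V) :=
    Finite.exists_max _
  set R := ⨆ v : V, infDist v (A : Set V) with hR
  set Rs := ⨆ v : V, infDist v (Astar : Set V) with hRs
  have hRle : R ≤ infDist v0 (A : Set V) := ciSup_le hv0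
  have hRs_le : ∀ w, infDist w (Astar : Set V) ≤ Rs := fun w => le_ciSup (f := fun v : V => infDist v (Astar : Set V)) (bdd _) w
  have hAstar_ne : (Astar : Set V).Nonempty := by
    rw [Finset.coe_nonempty, ← Finset.card_pos, hAstar]; omega
  have hcomp : IsCompact (Astar : Set V) := Astar.finite_toSet.isCompact
  choose c hc_mem hc_dist using fun p : V => hcomp.exists_infDist_eq_dist hAstar_ne p
  set g : Fin (k + 1) → V := fun i => if h : (i : ℕ) < k then a i else v0 with hg
  have hcard : Fintype.card {x // x ∈ Astar} < Fintype.card (Fin (k + 1)) := by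
    simp [hAstar]
  obtain ⟨i, j, hij, heq⟩ := Fintype.exists_ne_map_eq_of_card_lt
    (fun i : Fin (k + 1) => (⟨c (g i), hc_mem (g i)⟩ : {x // x ∈ Astar})) hcard
  have heq' : c (g i) = c (g j) := congrArg Subtype.val heq
  have hdist : dist (g i) (g j) ≤ 2 * Rs := by
    calc dist (g i) (g j) ≤ dist (g i) (c (g i)) + dist (c (g j)) (g j) := by
          rw [heq']; exact dist_triangle _ _ _
      _ = infDist (g i) (Astar : Set V) + infDist (g j) (Astar : Set V) := by
          rw [← hc_dist, dist_comm, ← hc_dist]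
      _ ≤ Rs + Rs := add_le_add (hRs_le _) (hRs_le _)
      _ = 2 * Rs := by ring
  set E : ℕ → Finset V := fun j => (Finset.range j).image a with hE
  set f : ℕ → ℝ := fun j =>
    (⨆ v : V, infDist v ((E j : Finset V) : Set V)) - infDist (a j) ((E j : Finset V) : Set V)
    with hf
  have hne : (Finset.Icc 1 (k - 1)).Nonempty := Finset.nonempty_Icc.mpr (by omega)
  set S := (Finset.Icc 1 (k - 1)).sup' hne f with hS
  have hEne : ∀ m : ℕ, 1 ≤ m → ((E m : Finset V) : Set V).Nonempty := by
    intro m hm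
    rw [Finset.coe_nonempty]
    exact (Finset.nonempty_range_iff.mpr (by omega)).image a
  have hSterm : ∀ m ∈ Finset.Icc 1 (k - 1), f m ≤ S := fun m hm => Finset.le_sup' f hm
  have hS0 : (0 : ℝ) ≤ S := by
    have h1 : (1 : ℕ) ∈ Finset.Icc 1 (k - 1) := by simp; omega
    have : infDist (a 1) ((E 1 : Finset V) : Set V) ≤
        ⨆ v : V, infDist v ((E 1 : Finset V) : Set V) := le_ciSup (f := fun v : V => infDist v ((E 1 : Finset V) : Set V)) (bdd _) (a 1)
    have := hSterm 1 h1
    simp only [hf] at this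
    linarith
  -- key: R - 2*Rs ≤ S
  have key : R - 2 * Rs ≤ S := by
    by_cases hi : (i : ℕ) < k
    · by_cases hj : (j : ℕ) < k
      · -- both points among a 0..a (k-1)
        have hmn : (i : ℕ) ≠ (j : ℕ) := fun h => hij (Fin.ext h)
        -- wlog i < j by symmetry; handle both orders uniformly
        obtain ⟨m, n, hm, hn, hmn', hd⟩ :
            ∃ m n : ℕ, m < n ∧ n < k ∧ dist (a n) (a m) ≤ 2 * Rs ∧ True := by
          rcases lt_or_gt_of_ne hmn with h | h
          · exact ⟨i, j, h, hj, by
              have : g i = a i := dif_pos hi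
              have hgj : g j = a j := dif_pos hj
              rw [this, hgj] at hdist
              rw [dist_comm]; exact hdist, trivial⟩
          · exact ⟨j, i, h, hi, by
              have : g i = a i := dif_pos hi
              have hgj : g j = a j := dif_pos hj
              rw [this, hgj] at hdist
              exact hdist, trivial⟩
        have hnIcc : n ∈ Finset.Icc 1 (k - 1) := by
          simp only [Finset.mem_Icc]; omega
        have hamE : a m ∈ ((E n : Finset V) : Set V) := by
          simp only [hE, Finset.coe_image, Finset.coe_range]
          exact ⟨m, by simpa using hm, rfl⟩
        have h1 : infDist (a n) ((E n : Finset V) : Set V) ≤ 2 * Rs :=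
          le_trans (infDist_le_dist_of_mem hamE) hmn'
        have hsub : ((E n : Finset V) : Set V) ⊆ (A : Set V) := by
          intro x hx
          simp only [hE, hA, Finset.coe_image, Finset.coe_range] at hx ⊢
          obtain ⟨p, hp, rfl⟩ := hx
          exact ⟨p, by simp at hp ⊢; omega, rfl⟩
        have h2 : R ≤ ⨆ v : V, infDist v ((E n : Finset V) : Set V) := by
          refine le_trans hRle (le_trans ?_ (le_ciSup (f := fun v : V => infDist v ((E n : Finset V) : Set V)) (bdd _) v0))
          exact infDist_le_infDist_of_subset hsub (hEne n (by omega))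
        have := hSterm n hnIcc
        simp only [hf] at this
        linarith
      · -- g j = v0
        have hjk : (j : ℕ) = k := by omega
        have hgj : g j = v0 := dif_neg (by omega)
        have hgi : g i = a i := dif_pos hi
        have haiA : a (i : ℕ) ∈ (A : Set V) := by
          simp only [hA, Finset.coe_image, Finset.coe_range]
          exact ⟨i, by simpa using hi, rfl⟩
        have : infDist v0 (A : Set V) ≤ 2 * Rs := by
          refine le_trans (infDist_le_dist_of_mem haiA) ?_
          rw [hgj, hgi] at hdist
          rw [dist_comm] at hdist
          exact hdist
        have hR2 : R ≤ 2 * Rs := le_trans hRle this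
        linarith
    · -- g i = v0, then j < k
      have hik : (i : ℕ) = k := by omega
      have hj : (j : ℕ) < k := by
        by_contra h
        exact hij (Fin.ext (by omega))
      have hgi : g i = v0 := dif_neg (by omega)
      have hgj : g j = a j := dif_pos hj
      have hajA : a (j : ℕ) ∈ (A : Set V) := by
        simp only [hA, Finset.coe_image, Finset.coe_range]
        exact ⟨j, by simpa using hj, rfl⟩
      have : infDist v0 (A : Set V) ≤ 2 * Rs := by
        refine le_trans (infDist_le_dist_of_mem hajA) ?_
        rw [hgi, hgj] at hdist
        exact hdist
      have hR2 : R ≤ 2 * Rs := le_trans hRle this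
      linarith
  linarith
end

section
/- Goemans–Williamson angle inequality: for unit vectors u, v ∈ ℝ^d, arccos(⟨u, v⟩)/π ≥ α · (1 − ⟨u, v⟩)/2, where α = (2/π) · min_{0 < θ ≤ π} θ/(1 − cos θ). -/
open scoped RealInnerProductSpace

theorem goemans_williamson_angle_inequality {d : ℕ}
    (u v : EuclideanSpace ℝ (Fin d)) (hu : ‖u‖ = 1) (hv : ‖v‖ = 1) :
    Real.arccos ⟪u, v⟫ / Real.pi ≥
      ((2 / Real.pi) * sInf ((fun θ : ℝ => θ / (1 - Real.cos θ)) '' Set.Ioc 0 Real.pi))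
        * ((1 - ⟪u, v⟫) / 2) := by
  set t : ℝ := ⟪u, v⟫ with ht
  have habs : |t| ≤ 1 := by
    have := abs_real_inner_le_norm u v
    simpa [hu, hv] using this
  have h1 : -1 ≤ t := by linarith [abs_le.mp habs |>.1]
  have h2 : t ≤ 1 := abs_le.mp habs |>.2
  set m : ℝ := sInf ((fun θ : ℝ => θ / (1 - Real.cos θ)) '' Set.Ioc 0 Real.pi) with hm
  have hpi : (0:ℝ) < Real.pi := Real.pi_pos
  have hbdd : BddBelow ((fun θ : ℝ => θ / (1 - Real.cos θ)) '' Set.Ioc 0 Real.pi) := by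
    refine ⟨0, ?_⟩
    rintro x ⟨θ, ⟨hθ0, hθπ⟩, rfl⟩
    have hc : Real.cos θ < 1 := by
      rcases lt_or_eq_of_le (Real.cos_le_one θ) with h | h
      · exact h
      · exfalso
        have := Real.cos_eq_one_iff_of_lt_of_lt (x := θ) (by linarith [Real.two_pi_pos]) (by linarith)
        have := this.mp h
        linarith
    exact div_nonneg hθ0.le (by linarith)
  have key : m * (1 - t) ≤ Real.arccos t := by
    have hcos : Real.cos (Real.arccos t) = t := Real.cos_arccos h1 h2
    rcases eq_or_lt_of_le (Real.arccos_nonneg t) with h0 | h0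
    · have : t = 1 := by rw [← hcos, ← h0, Real.cos_zero]
      simp [this, ← h0]
    · have hmem : Real.arccos t ∈ Set.Ioc 0 Real.pi := ⟨h0, Real.arccos_le_pi t⟩
      have hle : m ≤ Real.arccos t / (1 - t) := by
        have := csInf_le hbdd ⟨Real.arccos t, hmem, rfl⟩
        simpa [hcos] using this
      have htlt : t < 1 := by
        rcases lt_or_eq_of_le h2 with h | h
        · exact h
        · exfalso
          have : Real.arccos t = 0 := by rw [h, Real.arccos_one]
          linarith
      have hpos : (0:ℝ) < 1 - t := by linarith
      calc m * (1 - t) ≤ (Real.arccos t / (1 - t)) * (1 - t) := by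
            exact mul_le_mul_of_nonneg_right hle hpos.le
        _ = Real.arccos t := by field_simp
  have : (2 / Real.pi * m) * ((1 - t) / 2) = m * (1 - t) / Real.pi := by
    field_simp
  rw [ge_iff_le, this, div_le_div_iff_of_pos_right hpi]
  exact key
end

section
/- Random hyperplane cut probability: if u, v are unit vectors in ℝ^d and Z is uniformly distributed on the unit sphere of ℝ^d, then P(sign(⟨u,Z⟩) ≠ sign(⟨v,Z⟩)) = arccos(⟨u,v⟩)/π. -/
/-!
Write `cut u v` for the set of `z` with `sign ⟪u, z⟫ ≠ sign ⟪v, z⟫`. An isometry `O` pulls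
`cut (O u) (O v)` back to `cut u v`, and two pairs of unit vectors with the same inner product are
related by an isometry (a product of two reflections), so `μ (cut u v)` only depends on the angle
between `u` and `v`. On a great circle `t ↦ cos t • e + sin t • f` a hyperplane separating the
ends of an arc separates exactly one of its two sub-arcs, up to the hyperplane `e^⊥`; hence the
cut probability is additive in the angle on `[0, π]`, equals `1` at `π`, and a nonnegative
additive function on an interval is linear.

Hyperplanes are null: all of them have the same measure, and a nonzero `z` is orthogonal to at
most `d` of the vectors `(1, n, n², …)`, since `⟪(1, x, x², …), z⟫` is a nonzero polynomial in `x`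
of degree `< d`. A finite measure cannot give the same positive mass to infinitely many sets which
cover almost every point at most `d` times.
-/

open scoped RealInnerProductSpace
open MeasureTheory

namespace RandomHyperplane

section AdditiveOnInterval

variable {L : ℝ} {g : ℝ → ℝ}

theorem map_nat_mul_of_additive
    (hadd : ∀ a b, 0 ≤ a → 0 ≤ b → a + b ≤ L → g (a + b) = g a + g b)
    {t : ℝ} (ht : 0 ≤ t) : ∀ n : ℕ, n * t ≤ L → g (n * t) = n * g t
  | 0, hL => by
    have h0 := hadd 0 0 le_rfl le_rfl (by simpa using hL)
    rw [add_zero, left_eq_add] at h0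
    simp [h0]
  | n + 1, hL => by
    have hn : (n : ℝ) * t ≤ L := le_trans (by push_cast; nlinarith) hL
    push_cast at hL ⊢
    rw [add_one_mul, hadd _ _ (by positivity) ht (by linarith),
      map_nat_mul_of_additive hadd ht n hn]
    ring

theorem div_mul_le_of_additive (hL : 0 < L)
    (hadd : ∀ a b, 0 ≤ a → 0 ≤ b → a + b ≤ L → g (a + b) = g a + g b)
    (hnn : ∀ x, 0 ≤ x → x ≤ L → 0 ≤ g x) {x : ℝ} (hx0 : 0 ≤ x) (hxL : x ≤ L) :
    x / L * g L ≤ g x := by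
  have hgL := hnn L hL.le le_rfl
  have approx : ∀ n : ℕ, 0 < n → x / L * g L - g L / n ≤ g x := by
    intro n hn
    have hn' : (0 : ℝ) < n := by exact_mod_cast hn
    set t := L / n
    have ht : 0 < t := by positivity
    set k := ⌊x / t⌋₊
    have hkx : k * t ≤ x := (le_div_iff₀ ht).mp (Nat.floor_le (by positivity))
    have hxk : x / t < k + 1 := Nat.lt_floor_add_one _
    have hnt : n * t = L := mul_div_cancel₀ _ hn'.ne'
    have hgt : g t = g L / n := by
      have := map_nat_mul_of_additive hadd ht.le n hnt.le
      rw [hnt] at this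
      rw [this, mul_div_cancel_left₀ _ hn'.ne']
    have hmono : g (k * t) ≤ g x := by
      have hk0 : 0 ≤ k * t := by positivity
      have := hadd (k * t) (x - k * t) (by positivity) (by linarith) (by linarith)
      rw [add_sub_cancel] at this
      linarith [hnn (x - k * t) (by linarith) (by linarith)]
    rw [map_nat_mul_of_additive hadd ht.le k (by linarith), hgt] at hmono
    have hxn : x / L * n < k + 1 := by
      rwa [show x / t = x / L * n by simp only [t]; field_simp] at hxk
    calc x / L * g L - g L / n = (x / L * n - 1) * (g L / n) := by field_simp
      _ ≤ k * (g L / n) := by gcongr; linarith [hxn]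
      _ ≤ g x := hmono
  have hlim : Filter.Tendsto (fun n : ℕ => x / L * g L - g L / n) Filter.atTop
      (nhds (x / L * g L)) := by
    simpa using tendsto_const_nhds.sub (tendsto_const_div_atTop_nhds_zero_nat (g L))
  exact le_of_tendsto hlim (Filter.eventually_atTop.mpr ⟨1, fun n hn => approx n hn⟩)

theorem eq_div_mul_of_additive (hL : 0 < L)
    (hadd : ∀ a b, 0 ≤ a → 0 ≤ b → a + b ≤ L → g (a + b) = g a + g b)
    (hnn : ∀ x, 0 ≤ x → x ≤ L → 0 ≤ g x) {θ : ℝ} (hθ0 : 0 ≤ θ) (hθL : θ ≤ L) :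
    g θ = θ / L * g L := by
  have hsplit := hadd θ (L - θ) hθ0 (by linarith) (by linarith)
  rw [add_sub_cancel] at hsplit
  have h₁ := div_mul_le_of_additive hL hadd hnn hθ0 hθL
  have h₂ := div_mul_le_of_additive hL hadd hnn (x := L - θ) (by linarith) (by linarith)
  rw [sub_div, div_self hL.ne'] at h₂
  nlinarith

end AdditiveOnInterval

theorem exists_linearIsometryEquiv_apply_eq_and_apply_eq {E : Type*} [NormedAddCommGroup E]
    [InnerProductSpace ℝ E] {u v u' v' : E} (hu : ‖u‖ = ‖u'‖) (hv : ‖v‖ = ‖v'‖)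
    (huv : ⟪u, v⟫ = ⟪u', v'⟫) : ∃ O : E ≃ₗᵢ[ℝ] E, O u = u' ∧ O v = v' := by
  set R₁ := Submodule.reflection (ℝ ∙ (u - u'))ᗮ
  have hR₁ : R₁ u = u' := Submodule.reflection_sub hu
  set R₂ := Submodule.reflection (ℝ ∙ (R₁ v - v'))ᗮ
  have hR₂ : R₂ (R₁ v) = v' := Submodule.reflection_sub (by rwa [LinearIsometryEquiv.norm_map])
  have hu'_mem : u' ∈ (ℝ ∙ (R₁ v - v'))ᗮ := by
    rw [Submodule.mem_orthogonal_singleton_iff_inner_right, inner_sub_left, ← hR₁,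
      LinearIsometryEquiv.inner_map_map, hR₁, real_inner_comm u v, real_inner_comm u' v', huv,
      sub_self]
  refine ⟨R₁.trans R₂, ?_, hR₂⟩
  rw [LinearIsometryEquiv.trans_apply, hR₁]
  exact Submodule.reflection_mem_subspace_eq_self hu'_mem

section Cut

variable {E : Type*} [NormedAddCommGroup E] [InnerProductSpace ℝ E]

def cut (u v : E) : Set E := {z | ¬(0 ≤ ⟪u, z⟫ ↔ 0 ≤ ⟪v, z⟫)}

@[simp]
theorem cut_self (u : E) : cut u u = ∅ := by simp [cut]

theorem cut_eq_symmDiff (u v w : E) : cut u v = symmDiff (cut u w) (cut w v) := by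
  ext z
  simp only [cut, Set.mem_symmDiff, Set.mem_ofPred_eq]
  tauto

theorem cut_inter_cut_subset {u v w : E} {a b c : ℝ} (ha : 0 < a) (hb : 0 ≤ b) (hc : 0 ≤ c)
    (h : c • w = a • u + b • v) : cut u w ∩ cut w v ⊆ {z | ⟪u, z⟫ = 0} := by
  intro z ⟨huw, hwv⟩
  have hz : c * ⟪w, z⟫ = a * ⟪u, z⟫ + b * ⟪v, z⟫ := by
    simpa only [inner_add_left, real_inner_smul_left] using congrArg (⟪·, z⟫) h
  simp only [cut, Set.mem_ofPred_eq] at huw hwv ⊢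
  have huv : 0 ≤ ⟪u, z⟫ ↔ 0 ≤ ⟪v, z⟫ := by tauto
  have huw : 0 ≤ ⟪u, z⟫ ↔ ⟪w, z⟫ < 0 := by rw [← not_le]; tauto
  rcases le_or_gt 0 ⟪u, z⟫ with hu | hu
  · nlinarith [mul_nonneg hb (huv.mp hu), mul_nonneg hc (neg_nonneg.mpr (huw.mp hu).le)]
  · have hv : ⟪v, z⟫ < 0 := not_le.mp (mt huv.mpr (not_le.mpr hu))
    have hw : 0 ≤ ⟪w, z⟫ := not_lt.mp (mt huw.mpr (not_le.mpr hu))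
    nlinarith [mul_neg_of_pos_of_neg ha hu, mul_nonpos_of_nonneg_of_nonpos hb hv.le,
      mul_nonneg hc hw]

theorem compl_cut_neg_subset (u : E) : (cut u (-u))ᶜ ⊆ {z | ⟪u, z⟫ = 0} := by
  intro z hz
  simp only [cut, Set.mem_compl_iff, Set.mem_ofPred_eq, not_not, inner_neg_left,
    neg_nonneg] at hz ⊢
  by_cases h : 0 ≤ ⟪u, z⟫
  · exact le_antisymm (hz.mp h) h
  · exact absurd (hz.mpr (not_le.mp h).le) h

theorem preimage_cut (O : E ≃ₗᵢ[ℝ] E) (u v : E) : O ⁻¹' cut (O u) (O v) = cut u v := by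
  ext z
  simp [cut]

variable [MeasurableSpace E] [BorelSpace E]

theorem measurableSet_cut (u v : E) : MeasurableSet (cut u v) := by
  have halfSpace (w : E) : MeasurableSet {z : E | 0 ≤ ⟪w, z⟫} :=
    (isClosed_le continuous_const (continuous_const.inner continuous_id)).measurableSet
  have : cut u v = symmDiff {z | 0 ≤ ⟪u, z⟫} {z | 0 ≤ ⟪v, z⟫} := by
    ext z
    simp only [cut, Set.mem_symmDiff, Set.mem_ofPred_eq]
    tauto
  exact this ▸ (halfSpace u).symmDiff (halfSpace v)

variable {μ : Measure E}

theorem measure_cut_eq_add {u v w : E} (h : μ (cut u w ∩ cut w v) = 0) :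
    μ (cut u v) = μ (cut u w) + μ (cut w v) := by
  rw [cut_eq_symmDiff u v w, measure_symmDiff_eq (measurableSet_cut u w).nullMeasurableSet
    (measurableSet_cut w v).nullMeasurableSet, measure_sdiff_null' h,
    measure_sdiff_null' (Set.inter_comm _ _ ▸ h)]

theorem measure_cut_neg [IsProbabilityMeasure μ] {u : E} (hu : μ {z | ⟪u, z⟫ = 0} = 0) :
    μ (cut u (-u)) = 1 :=
  (prob_compl_eq_zero_iff (measurableSet_cut u (-u))).mp
    (measure_mono_null (compl_cut_neg_subset u) hu)

variable (hinv : ∀ O : E ≃ₗᵢ[ℝ] E, μ.map O = μ)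
include hinv

theorem measure_preimage_linearIsometryEquiv (O : E ≃ₗᵢ[ℝ] E) {s : Set E}
    (hs : MeasurableSet s) : μ (O ⁻¹' s) = μ s :=
  MeasurePreserving.measure_preimage ⟨O.continuous.measurable, hinv O⟩ hs.nullMeasurableSet

theorem measure_cut_congr {u v u' v' : E} (hu : ‖u‖ = ‖u'‖) (hv : ‖v‖ = ‖v'‖)
    (huv : ⟪u, v⟫ = ⟪u', v'⟫) : μ (cut u v) = μ (cut u' v') := by
  obtain ⟨O, rfl, rfl⟩ := exists_linearIsometryEquiv_apply_eq_and_apply_eq hu hv huv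
  rw [← preimage_cut O, measure_preimage_linearIsometryEquiv hinv O (measurableSet_cut _ _)]

end Cut

theorem eq_zero_of_measure_eq_of_card_le {α : Type*} [MeasurableSpace α] {μ : Measure α}
    [IsFiniteMeasure μ] {s : ℕ → Set α} (hs : ∀ n, MeasurableSet (s n)) {q : ENNReal}
    (hq : ∀ n, μ (s n) = q) {m : ℕ}
    (hm : ∀ᵐ x ∂μ, ∀ t : Finset ℕ, (∀ n ∈ t, x ∈ s n) → t.card ≤ m) : q = 0 := by
  classical
  have hsum (N : ℕ) : (N : ENNReal) * q ≤ m * μ Set.univ :=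
    calc (N : ENNReal) * q = ∑ n ∈ Finset.range N, μ (s n) := by simp [hq]
      _ = ∫⁻ x, ∑ n ∈ Finset.range N, (s n).indicator 1 x ∂μ := by
        rw [lintegral_finsetSum _ fun n _ => measurable_one.indicator (hs n)]
        simp only [lintegral_indicator_one (hs _)]
      _ ≤ ∫⁻ _, (m : ENNReal) ∂μ := lintegral_mono_ae <| hm.mono fun x hx => by
        simpa only [Set.indicator_apply, Pi.one_apply, Finset.sum_boole, Nat.cast_le] using
          hx _ fun n hn => (Finset.mem_filter.mp hn).2
      _ = m * μ Set.univ := lintegral_const _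
  by_contra hq0
  obtain ⟨N, hN⟩ := ENNReal.exists_nat_mul_gt hq0 (b := m * μ Set.univ) (by finiteness)
  exact (hsum N).not_gt hN

section Hyperplane

variable {E : Type*} [NormedAddCommGroup E] [InnerProductSpace ℝ E] [MeasurableSpace E]
  [BorelSpace E] {μ : Measure E}

theorem measurableSet_hyperplane (w : E) : MeasurableSet {z : E | ⟪w, z⟫ = 0} :=
  (isClosed_eq (continuous_const.inner continuous_id) continuous_const).measurableSet

theorem measure_hyperplane_congr (hinv : ∀ O : E ≃ₗᵢ[ℝ] E, μ.map O = μ) {w w' : E}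
    (hw : w ≠ 0) (hw' : w' ≠ 0) : μ {z | ⟪w, z⟫ = 0} = μ {z | ⟪w', z⟫ = 0} := by
  have hscale {c : ℝ} (hc : c ≠ 0) (x : E) :
      {z : E | ⟪c • x, z⟫ = 0} = {z | ⟪x, z⟫ = 0} := by
    ext z
    simp [real_inner_smul_left, hc]
  have hnorm : ‖‖w'‖ • w‖ = ‖‖w‖ • w'‖ := by simp [norm_smul, mul_comm]
  obtain ⟨O, hO, -⟩ := exists_linearIsometryEquiv_apply_eq_and_apply_eq hnorm hnorm
    (by rw [real_inner_self_eq_norm_sq, real_inner_self_eq_norm_sq, hnorm])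
  have hpre : O ⁻¹' {z | ⟪‖w‖ • w', z⟫ = 0} = {z | ⟪‖w'‖ • w, z⟫ = 0} := by
    ext z
    simp only [Set.preimage_ofPred_eq, ← hO, LinearIsometryEquiv.inner_map_map]
  rw [← hscale (norm_ne_zero_iff.mpr hw') w, ← hscale (norm_ne_zero_iff.mpr hw) w', ← hpre,
    measure_preimage_linearIsometryEquiv hinv O (measurableSet_hyperplane _)]

end Hyperplane

section MomentCurve

open Polynomial

variable {d : ℕ}

def momentVector (d : ℕ) (x : ℝ) : EuclideanSpace ℝ (Fin d) :=
  WithLp.toLp 2 fun i => x ^ (i : ℕ)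

noncomputable def coordPolynomial (z : EuclideanSpace ℝ (Fin d)) : ℝ[X] :=
  ∑ i : Fin d, C (z i) * X ^ (i : ℕ)

theorem coeff_coordPolynomial (z : EuclideanSpace ℝ (Fin d)) (i : Fin d) :
    (coordPolynomial z).coeff i = z i := by
  simp [coordPolynomial, finsetSum_coeff, Fin.val_inj]

theorem natDegree_coordPolynomial_le (z : EuclideanSpace ℝ (Fin d)) :
    (coordPolynomial z).natDegree ≤ d :=
  natDegree_sum_le_of_forall_le _ _ fun i _ => (natDegree_C_mul_X_pow_le _ _).trans i.is_lt.le

theorem inner_momentVector (x : ℝ) (z : EuclideanSpace ℝ (Fin d)) :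
    ⟪momentVector d x, z⟫ = (coordPolynomial z).eval x := by
  simp [momentVector, coordPolynomial, PiLp.inner_apply, eval_finsetSum]

theorem card_le_of_inner_momentVector_eq_zero {z : EuclideanSpace ℝ (Fin d)} (hz : z ≠ 0)
    (S : Finset ℕ) (hS : ∀ n ∈ S, ⟪momentVector d n, z⟫ = 0) : S.card ≤ d := by
  have hp : coordPolynomial z ≠ 0 := fun hp =>
    hz (by ext i; simpa [hp] using (coeff_coordPolynomial z i).symm)
  have hroots : (S.image (Nat.cast : ℕ → ℝ)).val ⊆ (coordPolynomial z).roots := by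
    intro x hx
    obtain ⟨n, hn, rfl⟩ := Finset.mem_image.mp (show x ∈ S.image _ from hx)
    rw [mem_roots hp, IsRoot.def, ← inner_momentVector]
    exact hS n hn
  calc S.card = (S.image (Nat.cast : ℕ → ℝ)).card :=
        (Finset.card_image_of_injective _ Nat.cast_injective).symm
    _ ≤ (coordPolynomial z).natDegree := card_le_degree_of_subset_roots hroots
    _ ≤ d := natDegree_coordPolynomial_le z

theorem measure_hyperplane_eq_zero {μ : Measure (EuclideanSpace ℝ (Fin d))}
    [IsFiniteMeasure μ] (h0 : ∀ᵐ z ∂μ, z ≠ 0)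
    (hinv : ∀ O : EuclideanSpace ℝ (Fin d) ≃ₗᵢ[ℝ] EuclideanSpace ℝ (Fin d), μ.map O = μ)
    {w : EuclideanSpace ℝ (Fin d)} (hw : w ≠ 0) : μ {z | ⟪w, z⟫ = 0} = 0 := by
  obtain ⟨i, -⟩ : ∃ i, w i ≠ 0 := by
    by_contra! h
    exact hw (by ext i; simp [h])
  have hmoment (x : ℝ) : momentVector d x ≠ 0 := fun h => by
    simpa [momentVector] using congrArg (· ⟨0, i.pos⟩) h
  exact eq_zero_of_measure_eq_of_card_le (fun n => measurableSet_hyperplane _)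
    (fun n => measure_hyperplane_congr hinv (hmoment n) hw)
    (h0.mono fun z hz => card_le_of_inner_momentVector_eq_zero hz)

end MomentCurve

section GreatCircle

variable {E : Type*} [NormedAddCommGroup E] [InnerProductSpace ℝ E]

noncomputable def greatCircle (e f : E) (t : ℝ) : E := Real.cos t • e + Real.sin t • f

@[simp]
theorem greatCircle_zero (e f : E) : greatCircle e f 0 = e := by simp [greatCircle]

@[simp]
theorem greatCircle_pi (e f : E) : greatCircle e f Real.pi = -e := by simp [greatCircle]

theorem sin_add_smul_greatCircle (e f : E) (a b : ℝ) :
    Real.sin (a + b) • greatCircle e f a =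
      Real.sin b • greatCircle e f 0 + Real.sin a • greatCircle e f (a + b) := by
  simp only [greatCircle, Real.cos_zero, Real.sin_zero, Real.sin_add, Real.cos_add]
  match_scalars
  · linear_combination Real.sin b * Real.sin_sq_add_cos_sq a
  · ring

theorem exists_eq_greatCircle_arccos {u v : E} (hu : ‖u‖ = 1) (hv : ‖v‖ = 1) (hvu : v ≠ u)
    (hvu' : v ≠ -u) :
    ∃ f : E, ‖f‖ = 1 ∧ ⟪u, f⟫ = 0 ∧ v = greatCircle u f (Real.arccos ⟪u, v⟫) := by
  set c := ⟪u, v⟫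
  have hc : |c| < 1 := by
    refine (abs_real_inner_le_norm u v).trans_eq (by rw [hu, hv, one_mul]) |>.lt_of_ne
      fun h => ?_
    rcases abs_eq zero_le_one |>.mp h with h | h
    · exact hvu ((inner_eq_one_iff_of_norm_eq_one hu hv).mp h).symm
    · exact hvu' (by rw [(inner_eq_neg_one_iff_of_norm_eq_one hu hv).mp h, neg_neg])
  obtain ⟨hc₁, hc₂⟩ := abs_lt.mp hc
  set s := Real.sqrt (1 - c ^ 2)
  have hs : 0 < s := Real.sqrt_pos.mpr (by nlinarith)
  have hnorm : ‖v - c • u‖ = s := by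
    rw [← Real.sqrt_sq (norm_nonneg _), norm_sub_sq_real, norm_smul, real_inner_smul_right,
      real_inner_comm, hu, hv, Real.norm_eq_abs, mul_one, sq_abs]
    congr 1
    ring
  refine ⟨s⁻¹ • (v - c • u), ?_, ?_, ?_⟩
  · rw [norm_smul, hnorm, Real.norm_eq_abs, abs_inv, abs_of_pos hs, inv_mul_cancel₀ hs.ne']
  · rw [real_inner_smul_right, inner_sub_right, real_inner_smul_right, real_inner_self_eq_norm_sq,
      hu]
    ring
  · rw [greatCircle, Real.cos_arccos hc₁.le hc₂.le, Real.sin_arccos, smul_inv_smul₀ hs.ne',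
      add_sub_cancel]

variable {e f : E} (he : ‖e‖ = 1) (hf : ‖f‖ = 1) (hef : ⟪e, f⟫ = 0)
include he hf hef

theorem inner_greatCircle (s t : ℝ) :
    ⟪greatCircle e f s, greatCircle e f t⟫ = Real.cos (s - t) := by
  have hee : ⟪e, e⟫ = 1 := by rw [real_inner_self_eq_norm_sq, he, one_pow]
  have hff : ⟪f, f⟫ = 1 := by rw [real_inner_self_eq_norm_sq, hf, one_pow]
  simp only [greatCircle, inner_add_left, inner_add_right, real_inner_smul_left,
    real_inner_smul_right, hee, hff, hef, real_inner_comm e f, Real.cos_sub]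
  ring

theorem norm_greatCircle (t : ℝ) : ‖greatCircle e f t‖ = 1 := by
  have h := inner_greatCircle he hf hef t t
  rwa [sub_self, Real.cos_zero, real_inner_self_eq_norm_sq,
    pow_eq_one_iff_of_nonneg (norm_nonneg _) two_ne_zero] at h

variable [MeasurableSpace E] [BorelSpace E] {μ : Measure E}
  (hinv : ∀ O : E ≃ₗᵢ[ℝ] E, μ.map O = μ) (hnull : μ {z | ⟪e, z⟫ = 0} = 0)
include hinv hnull

theorem measure_cut_greatCircle_add {a b : ℝ} (ha : 0 ≤ a) (hb : 0 ≤ b)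
    (hab : a + b ≤ Real.pi) :
    μ (cut e (greatCircle e f (a + b))) =
      μ (cut e (greatCircle e f a)) + μ (cut e (greatCircle e f b)) := by
  rcases ha.eq_or_lt with rfl | ha
  · simp
  rcases hb.eq_or_lt with rfl | hb
  · simp
  have hsa : 0 < Real.sin a := Real.sin_pos_of_pos_of_lt_pi ha (by linarith)
  have hsb : 0 < Real.sin b := Real.sin_pos_of_pos_of_lt_pi hb (by linarith)
  have hsab : 0 ≤ Real.sin (a + b) := Real.sin_nonneg_of_nonneg_of_le_pi (by linarith) hab
  have hsplit := measure_cut_eq_add (μ := μ) <| measure_mono_null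
    (cut_inter_cut_subset hsb hsa.le hsab (sin_add_smul_greatCircle e f a b))
    (by simpa using hnull)
  rw [greatCircle_zero] at hsplit
  have hrot : ⟪greatCircle e f a, greatCircle e f (a + b)⟫ = ⟪e, greatCircle e f b⟫ := by
    have h0b := inner_greatCircle he hf hef 0 b
    rw [greatCircle_zero] at h0b
    rw [h0b, inner_greatCircle he hf hef]
    congr 1
    ring
  rw [hsplit, measure_cut_congr hinv ((norm_greatCircle he hf hef a).trans he.symm)
    ((norm_greatCircle he hf hef _).trans (norm_greatCircle he hf hef b).symm) hrot]

theorem measure_cut_greatCircle [IsProbabilityMeasure μ] {θ : ℝ} (hθ0 : 0 ≤ θ)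
    (hθπ : θ ≤ Real.pi) : μ (cut e (greatCircle e f θ)) = ENNReal.ofReal (θ / Real.pi) := by
  set g : ℝ → ℝ := fun t => (μ (cut e (greatCircle e f t))).toReal
  have hadd (a b : ℝ) (ha : 0 ≤ a) (hb : 0 ≤ b) (hab : a + b ≤ Real.pi) :
      g (a + b) = g a + g b := by
    simp only [g, measure_cut_greatCircle_add he hf hef hinv hnull ha hb hab,
      ENNReal.toReal_add (measure_ne_top _ _) (measure_ne_top _ _)]
  have hπ : g Real.pi = 1 := by simp [g, measure_cut_neg hnull]
  have := eq_div_mul_of_additive Real.pi_pos hadd (fun _ _ _ => ENNReal.toReal_nonneg) hθ0 hθπ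
  rw [hπ, mul_one] at this
  rw [← this, ENNReal.ofReal_toReal (measure_ne_top _ _)]

end GreatCircle

end RandomHyperplane

open RandomHyperplane

theorem random_hyperplane_cut_probability {d : ℕ}
    (u v : EuclideanSpace ℝ (Fin d)) (hu : ‖u‖ = 1) (hv : ‖v‖ = 1)
    (μ : Measure (EuclideanSpace ℝ (Fin d))) [IsProbabilityMeasure μ]
    (hsphere : ∀ᵐ z ∂μ, ‖z‖ = 1)
    (hinv : ∀ O : EuclideanSpace ℝ (Fin d) ≃ₗᵢ[ℝ] EuclideanSpace ℝ (Fin d),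
      μ.map O = μ) :
    μ {z | (if 0 ≤ ⟪u, z⟫ then (1 : ℝ) else -1) ≠ (if 0 ≤ ⟪v, z⟫ then (1 : ℝ) else -1)}
      = ENNReal.ofReal (Real.arccos ⟪u, v⟫ / Real.pi) := by
  have hnull : μ {z | ⟪u, z⟫ = 0} = 0 :=
    measure_hyperplane_eq_zero (hsphere.mono fun z hz h => by simp [h] at hz) hinv
      (norm_ne_zero_iff.mp (hu ▸ one_ne_zero))
  have hcut :
      {z | (if 0 ≤ ⟪u, z⟫ then (1 : ℝ) else -1) ≠ (if 0 ≤ ⟪v, z⟫ then (1 : ℝ) else -1)} =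
        cut u v := by
    ext z
    simp only [cut, Set.mem_ofPred_eq]
    split_ifs <;> norm_num [*]
  rw [hcut]
  by_cases hvu : v = u
  · simp [hvu, hu]
  by_cases hvu' : v = -u
  · simp [hvu', measure_cut_neg hnull, hu, Real.pi_ne_zero]
  obtain ⟨f, hf, huf, hv'⟩ := exists_eq_greatCircle_arccos hu hv hvu hvu'
  conv_lhs => rw [hv']
  exact measure_cut_greatCircle hu hf huf hinv hnull (Real.arccos_nonneg _)
    (Real.arccos_le_pi _)
end

section
/- Regret allocation inequality: let m, n be positive integers, Δ > 0, β ≥ 0, p ∈ [0,1]^n, N ∈ ℕ^n with N_i ≥ 1 for all i, δ_i > 0 with δ_i ≤ Δ/p_i whenever p_i > 0. If Δ ≤ √((1/2) Σ_i p_i² β_i / N_i) and for all i, N_i > p_i² β_i / Δ², then Δ ≤ Σ_{i : N_i ≤ m β_i/δ_i²} p_i² β_i/(Δ N_i), where m ≥ the number of indices i with p_i > 0. -/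
open scoped Classical

theorem regret_allocation_inequality (n m : ℕ) (hm : 0 < m)
    (Δ : ℝ) (hΔ : 0 < Δ)
    (β p δ : Fin n → ℝ) (N : Fin n → ℕ)
    (hβ : ∀ i, 0 ≤ β i) (hp : ∀ i, 0 ≤ p i ∧ p i ≤ 1) (hN : ∀ i, 1 ≤ N i)
    (hδ : ∀ i, 0 < δ i) (hδΔ : ∀ i, 0 < p i → δ i ≤ Δ / p i)
    (hmcard : (Finset.univ.filter fun i => 0 < p i).card ≤ m)
    (hΔle : Δ ≤ Real.sqrt ((1 / 2) * ∑ i, p i ^ 2 * β i / N i))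
    (hNlarge : ∀ i, p i ^ 2 * β i / Δ ^ 2 < (N i : ℝ)) :
    Δ ≤ ∑ i ∈ Finset.univ.filter fun i => (N i : ℝ) ≤ m * β i / δ i ^ 2,
          p i ^ 2 * β i / (Δ * N i) := by
  have hm' : (0:ℝ) < m := by exact_mod_cast hm
  have hNpos : ∀ i, (0:ℝ) < N i := fun i => by exact_mod_cast hN i
  set f : Fin n → ℝ := fun i => p i ^ 2 * β i / N i with hf
  have hfnn : ∀ i, 0 ≤ f i := fun i =>
    div_nonneg (mul_nonneg (sq_nonneg _) (hβ i)) (hNpos i).le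
  set P : Fin n → Prop := fun i => (N i : ℝ) ≤ m * β i / δ i ^ 2 with hP
  have hΔ2 : Δ ^ 2 ≤ (1 / 2) * ∑ i, f i := by
    have := (Real.le_sqrt' hΔ).mp hΔle
    linarith
  -- bound the complement sum by Δ^2
  have hT : ∑ i ∈ Finset.univ.filter (fun i => ¬ P i), f i ≤ Δ ^ 2 := by
    have hterm : ∀ i ∈ Finset.univ.filter (fun i => ¬ P i),
        f i ≤ if 0 < p i then Δ ^ 2 / m else 0 := by
      intro i hi
      simp only [Finset.mem_filter, hP] at hi
      have hNi : m * β i / δ i ^ 2 < (N i : ℝ) := lt_of_not_ge hi.2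
      by_cases hpi : 0 < p i
      · simp only [hpi, if_true]
        rcases eq_or_lt_of_le (hβ i) with hb | hb
        · simp [hf, ← hb]
          positivity
        · have hpd : p i * δ i ≤ Δ := by
            have := hδΔ i hpi
            rw [le_div_iff₀ hpi] at this
            linarith [this]
          have hδi := hδ i
          have h1 : m * β i < δ i ^ 2 * N i := by
            rw [div_lt_iff₀ (by positivity)] at hNi
            nlinarith [hNi]
          have h2 : f i ≤ p i ^ 2 * δ i ^ 2 / m := by
            rw [hf, div_le_div_iff₀ (hNpos i) hm']
            nlinarith [sq_nonneg (p i), hNpos i]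
          have h3 : p i ^ 2 * δ i ^ 2 / m ≤ Δ ^ 2 / m := by
            have hsq : p i ^ 2 * δ i ^ 2 ≤ Δ ^ 2 := by
              nlinarith [mul_nonneg (hp i).1 hδi.le]
            gcongr
          linarith [h3]
      · simp only [hpi, if_false]
        have : p i = 0 := le_antisymm (not_lt.mp hpi) (hp i).1
        simp [hf, this]
    calc ∑ i ∈ Finset.univ.filter (fun i => ¬ P i), f i
        ≤ ∑ i ∈ Finset.univ.filter (fun i => ¬ P i),
            (if 0 < p i then Δ ^ 2 / m else 0) := Finset.sum_le_sum hterm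
      _ = ∑ i ∈ (Finset.univ.filter (fun i => ¬ P i)).filter (fun i => 0 < p i),
            Δ ^ 2 / m := (Finset.sum_filter _ _).symm
      _ = ((Finset.univ.filter (fun i => ¬ P i)).filter (fun i => 0 < p i)).card
            * (Δ ^ 2 / m) := by rw [Finset.sum_const, nsmul_eq_mul]
      _ ≤ m * (Δ ^ 2 / m) := by
          apply mul_le_mul_of_nonneg_right _ (by positivity)
          have hsub : (Finset.univ.filter (fun i => ¬ P i)).filter (fun i => 0 < p i)
              ⊆ Finset.univ.filter (fun i => 0 < p i) := by
            intro x hx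
            simp only [Finset.mem_filter] at hx ⊢
            exact ⟨Finset.mem_univ x, hx.2⟩
          exact_mod_cast le_trans (Finset.card_le_card hsub) hmcard
      _ = Δ ^ 2 := by field_simp
  have hsplit : ∑ i, f i = ∑ i ∈ Finset.univ.filter P, f i
      + ∑ i ∈ Finset.univ.filter (fun i => ¬ P i), f i :=
    (Finset.sum_filter_add_sum_filter_not _ _ _).symm
  have hS : Δ ^ 2 ≤ ∑ i ∈ Finset.univ.filter P, f i := by
    rw [hsplit] at hΔ2; linarith
  have : Δ ≤ (∑ i ∈ Finset.univ.filter P, f i) / Δ := by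
    rw [le_div_iff₀ hΔ]; nlinarith
  calc Δ ≤ (∑ i ∈ Finset.univ.filter P, f i) / Δ := this
    _ = ∑ i ∈ Finset.univ.filter P, p i ^ 2 * β i / (Δ * N i) := by
        rw [Finset.sum_div]
        apply Finset.sum_congr rfl
        intro i _
        rw [hf, div_div, mul_comm (N i : ℝ) Δ]
end
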